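/- Let T_n be a strongly connected arc-colored tournament of order n. Then for each vertex v of T_n, the number of non-rainbow triangles containing v is at most Δ^{-mon}(T_n)·(n−1) + Δ^{+mon}(T_n)·d^+(v). -/

import Mathlib

open Finset

/-- A tournament on vertex type `V`: between every two distinct vertices there is
exactly one arc, and there are no loops. -/
structure Tournament (V : Type) where
  arc : V → V → Bool
  irrefl : ∀ v, arc v v = false
  oneArc : ∀ u v : V, u ≠ v → arc u v = !arc v u

namespace Tournament

variable {V : Type} [Fintype V]

/-- Outdegree `d⁺(v)`. -/
def outDeg (T : Tournament V) (v : V) : ℕ :=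
  (univ.filter fun w => T.arc v w).card

/-- Indegree `d⁻(v)`. -/
def inDeg (T : Tournament V) (v : V) : ℕ :=
  (univ.filter fun u => T.arc u v).card

/-- `δ(v) = min{d⁺(v), d⁻(v)}`. -/
def minDeg (T : Tournament V) (v : V) : ℕ :=
  min (T.outDeg v) (T.inDeg v)

/-- The irregularity `i(T)`: the maximum of `|d⁺(v) − d⁻(v)|` over all vertices. -/
def irreg (T : Tournament V) : ℕ :=
  univ.sup fun v => ((T.outDeg v : ℤ) - (T.inDeg v : ℤ)).natAbs

/-- Strong connectivity: every vertex can reach every other vertex by a directed path. -/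
def StronglyConnected (T : Tournament V) : Prop :=
  ∀ u v : V, Relation.ReflTransGen (fun a b => T.arc a b) u v

/-- The number of in-arcs of `v` with color `c`. -/
def monoInDeg (T : Tournament V) (C : V → V → ℕ) (v : V) (c : ℕ) : ℕ :=
  (univ.filter fun u => T.arc u v ∧ C u v = c).card

/-- The number of out-arcs of `v` with color `c`. -/
def monoOutDeg (T : Tournament V) (C : V → V → ℕ) (v : V) (c : ℕ) : ℕ :=
  (univ.filter fun w => T.arc v w ∧ C v w = c).card

/-- The maximum monochromatic indegree `Δ^{-mon}(T)`. -/
def maxMonoIn (T : Tournament V) (C : V → V → ℕ) : ℕ :=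
  univ.sup fun v => (univ.image fun u => C u v).sup (T.monoInDeg C v)

/-- The maximum monochromatic outdegree `Δ^{+mon}(T)`. -/
def maxMonoOut (T : Tournament V) (C : V → V → ℕ) : ℕ :=
  univ.sup fun v => (univ.image fun w => C v w).sup (T.monoOutDeg C v)

/-- The directed triangles through `v`, encoded as ordered pairs `(w, u)` with
arcs `v → w → u → v`.  This gives each triangle through `v` exactly once. -/
def trianglesThrough (T : Tournament V) (v : V) : Finset (V × V) :=
  univ.filter fun p => T.arc v p.1 ∧ T.arc p.1 p.2 ∧ T.arc p.2 v

/-- The rainbow triangles through `v`: all three arcs have pairwise distinct colors. -/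
def rainbowTrianglesThrough (T : Tournament V) (C : V → V → ℕ) (v : V) : Finset (V × V) :=
  (T.trianglesThrough v).filter fun p =>
    C v p.1 ≠ C p.1 p.2 ∧ C p.1 p.2 ≠ C p.2 v ∧ C p.2 v ≠ C v p.1

/-- The non-rainbow triangles through `v`: some two arcs share a color. -/
def nonRainbowTrianglesThrough (T : Tournament V) (C : V → V → ℕ) (v : V) : Finset (V × V) :=
  (T.trianglesThrough v).filter fun p =>
    ¬(C v p.1 ≠ C p.1 p.2 ∧ C p.1 p.2 ≠ C p.2 v ∧ C p.2 v ≠ C v p.1)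

/-- Ordered triples `(x, y, z)` with arcs `x → y → z → x`.  Each directed triangle
is counted exactly three times (once per cyclic rotation). -/
def triangleTriples (T : Tournament V) : Finset (V × V × V) :=
  univ.filter fun p => T.arc p.1 p.2.1 ∧ T.arc p.2.1 p.2.2 ∧ T.arc p.2.2 p.1

/-- Ordered triples representing rainbow triangles (each rainbow triangle thrice). -/
def rainbowTriples (T : Tournament V) (C : V → V → ℕ) : Finset (V × V × V) :=
  T.triangleTriples.filter fun p =>
    C p.1 p.2.1 ≠ C p.2.1 p.2.2 ∧ C p.2.1 p.2.2 ≠ C p.2.2 p.1 ∧ C p.2.2 p.1 ≠ C p.1 p.2.1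

/-- Ordered triples representing non-rainbow triangles (each such triangle thrice). -/
def nonRainbowTriples (T : Tournament V) (C : V → V → ℕ) : Finset (V × V × V) :=
  T.triangleTriples.filter fun p =>
    ¬(C p.1 p.2.1 ≠ C p.2.1 p.2.2 ∧ C p.2.1 p.2.2 ≠ C p.2.2 p.1 ∧ C p.2.2 p.1 ≠ C p.1 p.2.1)

end Tournament

namespace Tournament

variable {V : Type} [Fintype V]

lemma monoInDeg_le_maxMonoIn (T : Tournament V) (C : V → V → ℕ) (x : V) (c : ℕ) :
    T.monoInDeg C x c ≤ T.maxMonoIn C := by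
  rcases (univ.filter fun u => T.arc u x ∧ C u x = c).eq_empty_or_nonempty with h | ⟨u, hu⟩
  · unfold monoInDeg; rw [h]; simp
  · simp only [mem_filter] at hu
    have hc : c ∈ univ.image fun u => C u x := mem_image.2 ⟨u, mem_univ u, hu.2.2⟩
    calc T.monoInDeg C x c ≤ (univ.image fun u => C u x).sup (T.monoInDeg C x) :=
          Finset.le_sup hc
      _ ≤ T.maxMonoIn C := Finset.le_sup (f := fun v => (univ.image fun u => C u v).sup (T.monoInDeg C v)) (mem_univ x)

lemma monoOutDeg_le_maxMonoOut (T : Tournament V) (C : V → V → ℕ) (x : V) (c : ℕ) :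
    T.monoOutDeg C x c ≤ T.maxMonoOut C := by
  rcases (univ.filter fun w => T.arc x w ∧ C x w = c).eq_empty_or_nonempty with h | ⟨w, hw⟩
  · unfold monoOutDeg; rw [h]; simp
  · simp only [mem_filter] at hw
    have hc : c ∈ univ.image fun w => C x w := mem_image.2 ⟨w, mem_univ w, hw.2.2⟩
    calc T.monoOutDeg C x c ≤ (univ.image fun w => C x w).sup (T.monoOutDeg C x) :=
          Finset.le_sup hc
      _ ≤ T.maxMonoOut C := Finset.le_sup (f := fun v => (univ.image fun w => C v w).sup (T.monoOutDeg C v)) (mem_univ x)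

lemma outDeg_add_inDeg_le (T : Tournament V) (v : V) :
    T.outDeg v + T.inDeg v ≤ Fintype.card V - 1 := by
  classical
  have hdisj : Disjoint (univ.filter fun w => T.arc v w) (univ.filter fun u => T.arc u v) := by
    rw [Finset.disjoint_left]
    intro u h1 h2
    simp only [mem_filter] at h1 h2
    by_cases huv : u = v
    · subst huv; rw [T.irrefl u] at h1; exact absurd h1.2 (by simp)
    · have := T.oneArc v u (Ne.symm huv)
      rw [h1.2, h2.2] at this; exact absurd this (by simp)
  have hsub : (univ.filter fun w => T.arc v w) ∪ (univ.filter fun u => T.arc u v)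
      ⊆ univ.erase v := by
    intro u hu
    simp only [mem_union, mem_filter] at hu
    refine mem_erase.2 ⟨?_, mem_univ u⟩
    rintro rfl
    simp [T.irrefl] at hu
  calc T.outDeg v + T.inDeg v
      = ((univ.filter fun w => T.arc v w) ∪ (univ.filter fun u => T.arc u v)).card := by
        rw [card_union_of_disjoint hdisj]; rfl
    _ ≤ (univ.erase v).card := card_le_card hsub
    _ = Fintype.card V - 1 := by rw [card_erase_of_mem (mem_univ v), card_univ]

end Tournament

open Tournament

/-- Lemma 2: In a strongly connected arc-colored tournament of order `n`,
every vertex `v` lies on at most `Δ^{-mon}(n−1) + Δ^{+mon} d⁺(v)` non-rainbow triangles. -/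
theorem nonrainbow_triangles_through_vertex_upper_bound
    {V : Type} [Fintype V] (n : ℕ) (hn : Fintype.card V = n)
    (T : Tournament V) (C : V → V → ℕ)
    (hsc : T.StronglyConnected)
    (v : V) :
    (T.nonRainbowTrianglesThrough C v).card ≤
      T.maxMonoIn C * (n - 1) + T.maxMonoOut C * T.outDeg v := by
  classical
  set N := T.nonRainbowTrianglesThrough C v with hN
  set S1 := N.filter (fun p => C p.2 v = C v p.1) with hS1
  set S2 := N.filter (fun p => C v p.1 = C p.1 p.2) with hS2
  set S3 := N.filter (fun p => C p.1 p.2 = C p.2 v) with hS3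
  have hmemN : ∀ p ∈ N, T.arc v p.1 ∧ T.arc p.1 p.2 ∧ T.arc p.2 v := by
    intro p hp
    simp only [hN, nonRainbowTrianglesThrough, trianglesThrough, mem_filter, mem_univ,
      true_and] at hp
    exact hp.1
  have hcover : N ⊆ S1 ∪ S2 ∪ S3 := by
    intro p hp
    have hp' := hp
    simp only [hN, nonRainbowTrianglesThrough, mem_filter] at hp'
    have := hp'.2
    simp only [mem_union, hS1, hS2, hS3, mem_filter]
    by_cases h1 : C v p.1 = C p.1 p.2
    · exact Or.inl (Or.inr ⟨hp, h1⟩)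
    by_cases h2 : C p.1 p.2 = C p.2 v
    · exact Or.inr ⟨hp, h2⟩
    by_cases h3 : C p.2 v = C v p.1
    · exact Or.inl (Or.inl ⟨hp, h3⟩)
    exact absurd ⟨h1, h2, h3⟩ this
  -- bound S1
  have hb1 : S1.card ≤ T.maxMonoIn C * T.outDeg v := by
    have hfib : ∀ b ∈ S1.image Prod.fst,
        (S1.filter fun p => p.1 = b).card ≤ T.maxMonoIn C := by
      intro b _
      have : (S1.filter fun p => p.1 = b).card ≤ T.monoInDeg C v (C v b) := by
        apply card_le_card_of_injOn Prod.snd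
        · intro p hp
          simp only [hS1, mem_coe, mem_filter] at hp
          obtain ⟨⟨hpN, hcol⟩, hfst⟩ := hp
          have harcs := hmemN p hpN
          simp only [monoInDeg, mem_coe, mem_filter, mem_univ, true_and]
          subst hfst
          exact ⟨harcs.2.2, hcol⟩
        · intro p hp q hq hpq
          simp only [coe_filter, Set.mem_setOf_eq] at hp hq
          exact Prod.ext (hp.2.trans hq.2.symm) hpq
      exact this.trans (T.monoInDeg_le_maxMonoIn C v _)
    calc S1.card ≤ T.maxMonoIn C * (S1.image Prod.fst).card :=
        card_le_mul_card_image S1 _ hfib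
      _ ≤ T.maxMonoIn C * T.outDeg v := by
        apply Nat.mul_le_mul_left
        apply card_le_card
        intro b hb
        simp only [mem_image] at hb
        obtain ⟨p, hp, rfl⟩ := hb
        simp only [hS1, mem_filter] at hp
        exact mem_filter.2 ⟨mem_univ _, (hmemN p hp.1).1⟩
  -- bound S2
  have hb2 : S2.card ≤ T.maxMonoOut C * T.outDeg v := by
    have hfib : ∀ b ∈ S2.image Prod.fst,
        (S2.filter fun p => p.1 = b).card ≤ T.maxMonoOut C := by
      intro b _
      have : (S2.filter fun p => p.1 = b).card ≤ T.monoOutDeg C b (C v b) := by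
        apply card_le_card_of_injOn Prod.snd
        · intro p hp
          simp only [hS2, mem_coe, mem_filter] at hp
          obtain ⟨⟨hpN, hcol⟩, hfst⟩ := hp
          have harcs := hmemN p hpN
          simp only [monoOutDeg, mem_coe, mem_filter, mem_univ, true_and]
          subst hfst
          exact ⟨harcs.2.1, hcol.symm⟩
        · intro p hp q hq hpq
          simp only [coe_filter, Set.mem_setOf_eq] at hp hq
          exact Prod.ext (hp.2.trans hq.2.symm) hpq
      exact this.trans (T.monoOutDeg_le_maxMonoOut C b _)
    calc S2.card ≤ T.maxMonoOut C * (S2.image Prod.fst).card :=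
        card_le_mul_card_image S2 _ hfib
      _ ≤ T.maxMonoOut C * T.outDeg v := by
        apply Nat.mul_le_mul_left
        apply card_le_card
        intro b hb
        simp only [mem_image] at hb
        obtain ⟨p, hp, rfl⟩ := hb
        simp only [hS2, mem_filter] at hp
        exact mem_filter.2 ⟨mem_univ _, (hmemN p hp.1).1⟩
  -- bound S3
  have hb3 : S3.card ≤ T.maxMonoIn C * T.inDeg v := by
    have hfib : ∀ b ∈ S3.image Prod.snd,
        (S3.filter fun p => p.2 = b).card ≤ T.maxMonoIn C := by
      intro b _
      have : (S3.filter fun p => p.2 = b).card ≤ T.monoInDeg C b (C b v) := by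
        apply card_le_card_of_injOn Prod.fst
        · intro p hp
          simp only [hS3, mem_coe, mem_filter] at hp
          obtain ⟨⟨hpN, hcol⟩, hsnd⟩ := hp
          have harcs := hmemN p hpN
          simp only [monoInDeg, mem_coe, mem_filter, mem_univ, true_and]
          subst hsnd
          exact ⟨harcs.2.1, hcol⟩
        · intro p hp q hq hpq
          simp only [coe_filter, Set.mem_setOf_eq] at hp hq
          exact Prod.ext hpq (hp.2.trans hq.2.symm)
      exact this.trans (T.monoInDeg_le_maxMonoIn C b _)
    calc S3.card ≤ T.maxMonoIn C * (S3.image Prod.snd).card :=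
        card_le_mul_card_image S3 _ hfib
      _ ≤ T.maxMonoIn C * T.inDeg v := by
        apply Nat.mul_le_mul_left
        apply card_le_card
        intro b hb
        simp only [mem_image] at hb
        obtain ⟨p, hp, rfl⟩ := hb
        simp only [hS3, mem_filter] at hp
        exact mem_filter.2 ⟨mem_univ _, (hmemN p hp.1).2.2⟩
  have hdeg : T.outDeg v + T.inDeg v ≤ n - 1 := by
    have := T.outDeg_add_inDeg_le v
    rwa [hn] at this
  calc N.card ≤ (S1 ∪ S2 ∪ S3).card := card_le_card hcover
    _ ≤ S1.card + S2.card + S3.card :=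
        le_trans (card_union_le _ _) (Nat.add_le_add_right (card_union_le _ _) _)
    _ ≤ T.maxMonoIn C * T.outDeg v + T.maxMonoOut C * T.outDeg v
        + T.maxMonoIn C * T.inDeg v := by omega
    _ = T.maxMonoIn C * (T.outDeg v + T.inDeg v) + T.maxMonoOut C * T.outDeg v := by ring
    _ ≤ T.maxMonoIn C * (n - 1) + T.maxMonoOut C * T.outDeg v := by
        have := Nat.mul_le_mul_left (T.maxMonoIn C) hdeg
        omega
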